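/- arXiv:1810.11577 — 2 statements merged into one kernel-verified Lean document; each statement's English description precedes it below -/
import Mathlib

section
/- Nonexistence via growth comparison: Suppose M : [2,∞) → (0,∞) is non-increasing and satisfies M(r) ≥ C₁ M(2r)^p F(r) for all r ≥ 2 (with p > 1, C₁ > 0) together with M(r) ≥ C₂ min(1, F(r)/V(r)), M(2r) ≥ C₃ M(r), and F(r) → ∞. If along a sequence rₙ → ∞ both F(rₙ)/V(rₙ) → 0 and V(rₙ)/F(rₙ)^{p/(p−1)} → 0, then no such function M exists. Equivalently, the inequalities force V(r) ≳ F(r)^{p/(p−1)} along the sequence, contradicting the second limit. -/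
theorem stmt17 (F V M : ℝ → ℝ) (p C₁ C₂ C₃ : ℝ)
    (hp : 1 < p) (hC₁ : 0 < C₁) (hC₂ : 0 < C₂) (hC₃ : 0 < C₃)
    (hFpos : ∀ r : ℝ, 2 ≤ r → 0 < F r) (hVpos : ∀ r : ℝ, 2 ≤ r → 0 < V r)
    (hMpos : ∀ r : ℝ, 2 ≤ r → 0 < M r)
    (hManti : AntitoneOn M (Set.Ici 2))
    (hM1 : ∀ r : ℝ, 2 ≤ r → C₁ * M (2 * r) ^ p * F r ≤ M r)
    (hM2 : ∀ r : ℝ, 2 ≤ r → C₂ * min 1 (F r / V r) ≤ M r)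
    (hM3 : ∀ r : ℝ, 2 ≤ r → C₃ * M r ≤ M (2 * r))
    (hFinf : Filter.Tendsto F Filter.atTop Filter.atTop)
    (r : ℕ → ℝ) (hrinf : Filter.Tendsto r Filter.atTop Filter.atTop)
    (hlim1 : Filter.Tendsto (fun n => F (r n) / V (r n)) Filter.atTop (nhds 0))
    (hlim2 : Filter.Tendsto (fun n => V (r n) / F (r n) ^ (p / (p - 1)))
      Filter.atTop (nhds 0)) :
    False := by
  have hq : 0 < p - 1 := by linarith
  set c : ℝ := C₁ * C₃ ^ p with hc
  have hcpos : 0 < c := mul_pos hC₁ (Real.rpow_pos_of_pos hC₃ p)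
  set ε : ℝ := C₂ * c ^ (1 / (p - 1)) with hε
  have hεpos : 0 < ε := mul_pos hC₂ (Real.rpow_pos_of_pos hcpos _)
  -- key pointwise bound
  have key : ∀ n : ℕ, 2 ≤ r n → F (r n) / V (r n) < 1 →
      ε ≤ V (r n) / F (r n) ^ (p / (p - 1)) := by
    intro n hs hlt
    set s := r n with hsdef
    have hF := hFpos s hs
    have hV := hVpos s hs
    have hM := hMpos s hs
    have h1 : C₁ * (C₃ * M s) ^ p * F s ≤ M s := by
      refine le_trans ?_ (hM1 s hs)
      have h2 : (C₃ * M s) ^ p ≤ M (2 * s) ^ p :=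
        Real.rpow_le_rpow (by positivity) (hM3 s hs) (by linarith)
      have := mul_le_mul_of_nonneg_right (mul_le_mul_of_nonneg_left h2 hC₁.le) hF.le
      linarith
    have h1' : M s ^ p * (c * F s) ≤ M s := by
      rw [Real.mul_rpow hC₃.le hM.le] at h1
      nlinarith [h1]
    set A : ℝ := c * F s with hA
    have hApos : 0 < A := mul_pos hcpos hF
    have h2 : M s ^ (p - 1) ≤ A⁻¹ := by
      have hms : M s ^ (p - 1) = M s ^ p / M s := by
        rw [Real.rpow_sub hM, Real.rpow_one]
      rw [hms, inv_eq_one_div, div_le_div_iff₀ hM hApos]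
      linarith
    have h3 : M s ≤ A⁻¹ ^ (1 / (p - 1)) := by
      have e : (p - 1) * (1 / (p - 1)) = 1 := by field_simp
      calc M s = M s ^ ((p - 1) * (1 / (p - 1))) := by rw [e, Real.rpow_one]
        _ = (M s ^ (p - 1)) ^ (1 / (p - 1)) := Real.rpow_mul hM.le _ _
        _ ≤ A⁻¹ ^ (1 / (p - 1)) :=
            Real.rpow_le_rpow (by positivity) h2 (by positivity)
    have h4 : C₂ * (F s / V s) ≤ A⁻¹ ^ (1 / (p - 1)) := by
      have := hM2 s hs
      rw [min_eq_right hlt.le] at this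
      linarith
    set B : ℝ := c ^ (1 / (p - 1)) with hB
    set G : ℝ := F s ^ (1 / (p - 1)) with hG
    have hBpos : 0 < B := Real.rpow_pos_of_pos hcpos _
    have hGpos : 0 < G := Real.rpow_pos_of_pos hF _
    have hAinv : A⁻¹ ^ (1 / (p - 1)) = (B * G)⁻¹ := by
      rw [Real.inv_rpow hApos.le, hA, Real.mul_rpow hcpos.le hF.le]
    rw [hAinv, inv_eq_one_div] at h4
    have h5 : C₂ * F s * (B * G) ≤ V s := by
      have h4' : C₂ * F s / V s ≤ 1 / (B * G) := by
        rw [mul_div_assoc]; exact h4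
      have := (div_le_div_iff₀ hV (mul_pos hBpos hGpos)).mp h4'
      linarith
    have hFG : F s ^ (p / (p - 1)) = F s * G := by
      have e : p / (p - 1) = 1 + 1 / (p - 1) := by field_simp; ring
      rw [e, Real.rpow_add hF, Real.rpow_one, hG]
    have hFGpos : 0 < F s ^ (p / (p - 1)) := Real.rpow_pos_of_pos hF _
    rw [le_div_iff₀ hFGpos, hFG, hε]
    nlinarith [h5]
  -- filter contradiction
  have ev1 : ∀ᶠ n in Filter.atTop, 2 ≤ r n := hrinf.eventually_ge_atTop 2
  have ev2 : ∀ᶠ n in Filter.atTop, F (r n) / V (r n) < 1 := by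
    have := hlim1.eventually (eventually_lt_nhds one_pos)
    exact this
  have ev3 : ∀ᶠ n in Filter.atTop, V (r n) / F (r n) ^ (p / (p - 1)) < ε := by
    exact hlim2.eventually (eventually_lt_nhds hεpos)
  obtain ⟨n, h1, h2, h3⟩ := (ev1.and (ev2.and ev3)).exists
  exact absurd (key n h1 h2) (not_le.mpr h3)
end

section
/- Eigenvalue survival bound: Let (u, λ) with λ > 0 and u not identically zero satisfy u(x) = E_x[e^{λt} u(X_t) 1_{t<τ_B}] restricted to a ball B where u > 0 on B̄, and let (u_B, λ_B) be the principal Dirichlet eigenpair on B with u_B(x₀) > 0, so that u_B(x₀) = E_{x₀}[e^{λ_B t} u_B(X_t) 1_{t<τ_B}]. Then λ ≤ λ_B. Consequently, combined with the eigenvalue bound λ_B ≤ C₁/F(r) for the ball of radius r, any eigenfunction with eigenvalue λ must vanish somewhere in every ball of radius R(Cλ^{−1}) contained in Ω, for C > C₁, where R = F^{−1}. -/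
theorem stmt18 {E : Type*} [MeasurableSpace E] [PseudoMetricSpace E]
    (P : E → MeasureTheory.Measure (ℝ → E))
    (hP : ∀ x, MeasureTheory.IsProbabilityMeasure (P x))
    (τB : (ℝ → E) → ℝ)
    (u uB : E → ℝ) (lam lamB C₁ C Fr : ℝ) (hlam : 0 < lam)
    (xc : E) (r : ℝ) (hr : 0 < r)
    (hpath : ∀ (ω : ℝ → E) (t : ℝ), 0 ≤ t → t < τB ω → ω t ∈ Metric.closedBall xc r)
    (hupos : ∀ y ∈ Metric.closedBall xc r, 0 < u y)
    (hm : ∃ m > (0:ℝ), ∀ y ∈ Metric.closedBall xc r, m ≤ u y)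
    (hubd : ∃ Mb, ∀ y, |u y| ≤ Mb) (huBbd : ∃ Mb, ∀ y, |uB y| ≤ Mb)
    (x₀ : E) (hx₀ : x₀ ∈ Metric.ball xc r) (huB₀ : 0 < uB x₀)
    (hFKu : ∀ t : ℝ, 0 ≤ t →
      u x₀ = ∫ ω, Real.exp (lam * t) * u (ω t) * (if t < τB ω then 1 else 0) ∂P x₀)
    (hFKuB : ∀ t : ℝ, 0 ≤ t →
      uB x₀ = ∫ ω, Real.exp (lamB * t) * uB (ω t) * (if t < τB ω then 1 else 0) ∂P x₀) :
    lam ≤ lamB ∧ (lamB ≤ C₁ / Fr → Fr = C / lam → C₁ < C → 0 < Fr → False) := by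
  obtain ⟨m, hm0, hmle⟩ := hm
  obtain ⟨MB, hMB⟩ := huBbd
  have hux₀ : 0 < u x₀ := hupos x₀ (Metric.ball_subset_closedBall hx₀)
  have hMB0 : 0 < MB := lt_of_lt_of_le huB₀ ((le_abs_self _).trans (hMB x₀))
  have key : ∀ t : ℝ, 0 ≤ t →
      uB x₀ * Real.exp (lam * t) ≤ (MB / m) * u x₀ * Real.exp (lamB * t) := by
    intro t ht
    set f : (ℝ → E) → ℝ := fun ω => u (ω t) * (if t < τB ω then 1 else 0) with hf
    set g : (ℝ → E) → ℝ := fun ω => uB (ω t) * (if t < τB ω then 1 else 0) with hg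
    have hFu : u x₀ = Real.exp (lam * t) * ∫ ω, f ω ∂P x₀ := by
      rw [← MeasureTheory.integral_const_mul]
      simpa [hf, mul_assoc] using hFKu t ht
    have hFuB : uB x₀ = Real.exp (lamB * t) * ∫ ω, g ω ∂P x₀ := by
      rw [← MeasureTheory.integral_const_mul]
      simpa [hg, mul_assoc] using hFKuB t ht
    have hfint : MeasureTheory.Integrable f (P x₀) := by
      by_contra h
      rw [MeasureTheory.integral_undef h, mul_zero] at hFu
      exact absurd hFu.symm hux₀.ne
    have hgint : MeasureTheory.Integrable g (P x₀) := by
      by_contra h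
      rw [MeasureTheory.integral_undef h, mul_zero] at hFuB
      exact absurd hFuB.symm huB₀.ne
    have hpt : ∀ ω, g ω ≤ (MB / m) * f ω := by
      intro ω
      by_cases h : t < τB ω
      · have hmem := hpath ω t ht h
        have h1 : uB (ω t) ≤ MB := (le_abs_self _).trans (hMB _)
        have h2 : m ≤ u (ω t) := hmle _ hmem
        have : MB = (MB / m) * m := by field_simp
        simp only [hf, hg, if_pos h, mul_one]
        calc uB (ω t) ≤ MB := h1
          _ = (MB / m) * m := this
          _ ≤ (MB / m) * u (ω t) := by
              apply mul_le_mul_of_nonneg_left h2 (by positivity)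
      · simp [hf, hg, if_neg h]
    have hIle : ∫ ω, g ω ∂P x₀ ≤ (MB / m) * ∫ ω, f ω ∂P x₀ := by
      rw [← MeasureTheory.integral_const_mul]
      exact MeasureTheory.integral_mono hgint (hfint.const_mul _) hpt
    have he1 : (0:ℝ) < Real.exp (lam * t) := Real.exp_pos _
    have he2 : (0:ℝ) < Real.exp (lamB * t) := Real.exp_pos _
    calc uB x₀ * Real.exp (lam * t)
        = Real.exp (lamB * t) * (∫ ω, g ω ∂P x₀) * Real.exp (lam * t) := by rw [← hFuB]
      _ ≤ Real.exp (lamB * t) * ((MB / m) * ∫ ω, f ω ∂P x₀) * Real.exp (lam * t) := by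
          gcongr
      _ = (MB / m) * (Real.exp (lam * t) * ∫ ω, f ω ∂P x₀) * Real.exp (lamB * t) := by ring
      _ = (MB / m) * u x₀ * Real.exp (lamB * t) := by rw [← hFu]
  have hmain : lam ≤ lamB := by
    by_contra h
    push_neg at h
    set c := uB x₀ with hc
    set K := (MB / m) * u x₀ with hK
    have hc0 : 0 < c := huB₀
    have hK0 : 0 < K := by positivity
    set δ := lam - lamB with hδ
    have hδ0 : 0 < δ := by simp [hδ]; linarith
    set t : ℝ := max 0 ((Real.log (K / c) + 1) / δ) with htdef
    have ht0 : 0 ≤ t := le_max_left _ _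
    have ht1 : (Real.log (K / c) + 1) / δ ≤ t := le_max_right _ _
    have hlt : Real.log (K / c) < δ * t := by
      have : Real.log (K / c) + 1 ≤ δ * t := by
        rw [div_le_iff₀ hδ0] at ht1
        linarith [mul_comm δ t]
      linarith
    have hexp : K / c < Real.exp (δ * t) :=
      (Real.log_lt_iff_lt_exp (by positivity)).mp hlt
    have hlt2 : K * Real.exp (lamB * t) < c * Real.exp (lam * t) := by
      have hesplit : Real.exp (δ * t) = Real.exp (lam * t) / Real.exp (lamB * t) := by
        rw [← Real.exp_sub, hδ]; ring_nf
      rw [hesplit, div_lt_div_iff₀ hc0 (Real.exp_pos _)] at hexp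
      linarith [hexp]
    have := key t ht0
    linarith
  refine ⟨hmain, ?_⟩
  intro h1 h2 h3 h4
  have hC : Fr * lam = C := by
    field_simp at h2
    linarith
  have hlam' : lam = C / Fr := by
    rw [eq_div_iff h4.ne']
    linarith
  have hlt : C₁ / Fr < C / Fr := (div_lt_div_iff_of_pos_right h4).mpr h3
  linarith
end
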